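/- Let f = c₁m₁ + ⋯ + c_t m_t ∈ ℤ[x₁,…,x_n], m₁ < ⋯ < m_t lexicographically, m_t = x₁^{e₁}⋯x_n^{e_n}, with |cᵢ| ≤ C, total degree ≤ D. Let β ≥ 2C+1, β₁ ≥ β, βᵢ ≥ β_{i−1}^{D+1} for i ≥ 2. Set Q = (f(β₁,…,β_{n−1},β_n)/β_n^{e_n}) / (f(β₁,…,β_{n−1},β_n+1)/(β_n+1)^{e_n}) and E = 1 + 2C/((β₁−1)(β_n−1)). Then 1/E < Q < E. -/

import Mathlib

open Finset


private lemma geo (b1 : ℚ) (hb1 : 2 ≤ b1) (v : ℕ → ℚ) (hv : ∀ k, 0 ≤ v k) :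
    ∀ N, (∀ k, k + 1 ≤ N → b1 * v k ≤ v (k + 1)) →
      (b1 - 1) * ∑ i ∈ range N, v i ≤ v N := by
  intro N
  induction N with
  | zero => intro _; simpa using hv 0
  | succ N ih =>
    intro hstep
    rw [Finset.sum_range_succ, mul_add]
    have h1 := ih fun k hk => hstep k (by omega)
    have h2 := hstep N (by omega)
    nlinarith [hv N]

private lemma pow_diff (x : ℚ) (hx : 0 ≤ x) :
    ∀ d : ℕ, (x+1)^(d+1) - x^(d+1) ≤ (d+1 : ℚ) * (x+1)^d := by
  intro d
  induction d with
  | zero => simp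
  | succ d ih =>
    have h1 : (x+1)^(d+1+1) - x^(d+1+1) = (x+1)*((x+1)^(d+1) - x^(d+1)) + x^(d+1) := by ring
    have hp : x^(d+1) ≤ (x+1)^(d+1) := by
      apply pow_le_pow_left₀ hx; linarith
    have hx1 : (0:ℚ) ≤ x + 1 := by linarith
    push_cast
    push_cast at ih
    nlinarith [pow_nonneg hx1 d, pow_nonneg hx1 (d+1), pow_succ (x+1) d]

private lemma nat_le_pow3 : ∀ e : ℕ, e + 1 ≤ 3 ^ e := by
  intro e
  induction e with
  | zero => simp
  | succ e ih =>
    have : 3^(e+1) = 3 * 3^e := by ring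
    omega

private lemma geomIcc (x : ℚ) (hx : 3 ≤ x) (N : ℕ) :
    ∑ d ∈ Icc 1 N, ((x+1)^d - x^d)/((x^d)*((x+1)^d)) =
      1/(x*(x-1)) - 1/(x^N*(x-1)) + 1/((x+1)^N*x) := by
  have hx0 : x ≠ 0 := by linarith
  have hx1 : x - 1 ≠ 0 := by intro h; nlinarith
  have hx2 : x + 1 ≠ 0 := by intro h; nlinarith
  induction N with
  | zero =>
    simp only [Finset.Icc_self, Nat.Icc_eq_range', pow_zero]
    norm_num
    field_simp
    ring
  | succ N ih =>
    rw [Finset.sum_Icc_succ_top (by omega : 1 ≤ N+1), ih]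
    have hp1 : x^N ≠ 0 := pow_ne_zero _ hx0
    have hp2 : (x+1)^N ≠ 0 := pow_ne_zero _ hx2
    rw [pow_succ, pow_succ]
    field_simp
    ring


private lemma ratio {n t D : ℕ} (m : Fin t → Fin n → ℕ)
    (hdeg : ∀ i, ∑ j, m i j ≤ D)
    (h : Fin n → ℚ) (b1 : ℚ) (hb13 : 3 ≤ b1)
    (hb1 : ∀ j, b1 ≤ h j)
    (hmono : ∀ j j' : Fin n, j ≤ j' → h j ≤ h j')
    (hchain : ∀ j j' : Fin n, (j : ℕ) + 1 = (j' : ℕ) → h j ^ (D + 1) ≤ h j')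
    (i i' : Fin t)
    (hl : ∃ j : Fin n, m i j < m i' j ∧ ∀ j', j < j' → m i j' = m i' j') :
    b1 * ∏ j, h j ^ m i j ≤ ∏ j, h j ^ m i' j := by
  obtain ⟨j, hjlt, hjeq⟩ := hl
  have h1 : ∀ j'' : Fin n, (1:ℚ) ≤ h j'' := fun j'' => le_trans (by linarith) (hb1 j'')
  have hpos : ∀ (f : Fin t) (s : Finset (Fin n)), (0:ℚ) < ∏ j'' ∈ s, h j'' ^ m f j'' :=
    fun f s => Finset.prod_pos fun j'' _ => pow_pos (by linarith [h1 j'']) _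
  have huniv : (univ : Finset (Fin n)) = Iio j ∪ Ici j := by
    ext k; simp [lt_or_ge k j]
  have hdisj : Disjoint (Iio j) (Ici j) := by
    simp only [Finset.disjoint_left, Finset.mem_Iio, Finset.mem_Ici]
    exact fun _ hk => not_le.2 hk
  have hIci : ∀ f : Fin t, ∏ j'' ∈ Ici j, h j'' ^ m f j''
      = h j ^ m f j * ∏ j'' ∈ Ioi j, h j'' ^ m f j'' := by
    intro f
    rw [← Finset.mul_prod_erase (Ici j) _ (by simp : j ∈ Ici j)]
    congr 1
    apply Finset.prod_congr _ fun _ _ => rfl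
    ext k; simp [Finset.mem_erase, lt_iff_le_and_ne, and_comm, eq_comm]
  have hsplit : ∀ f : Fin t, ∏ j'' , h j'' ^ m f j''
      = (∏ j'' ∈ Iio j, h j'' ^ m f j'') * (h j ^ m f j * ∏ j'' ∈ Ioi j, h j'' ^ m f j'') := by
    intro f
    rw [huniv, Finset.prod_union hdisj, hIci]
  -- key: b1 * prod over Iio j ≤ h j
  have hkey : b1 * ∏ j'' ∈ Iio j, h j'' ^ m i j'' ≤ h j := by
    rcases Nat.eq_zero_or_pos j.val with hj0 | hj0
    · have : (Iio j : Finset (Fin n)) = ∅ := by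
        apply Finset.eq_empty_of_forall_notMem
        intro k hk
        simp only [Finset.mem_Iio, Fin.lt_def, hj0] at hk
        omega
      rw [this]
      simpa using hb1 j
    · set p : Fin n := ⟨j.val - 1, by omega⟩ with hp
      have hple : ∀ k : Fin n, k ∈ Iio j → h k ≤ h p := by
        intro k hk
        apply hmono
        simp only [Finset.mem_Iio, Fin.lt_def] at hk
        simp [Fin.le_def, hp]; omega
      have hprodle : ∏ j'' ∈ Iio j, h j'' ^ m i j'' ≤ h p ^ (∑ j'' ∈ Iio j, m i j'') := by
        rw [← Finset.prod_pow_eq_pow_sum]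
        apply Finset.prod_le_prod
        · intro k _
          have := h1 k
          positivity
        · intro k hk
          exact pow_le_pow_left₀ (by linarith [h1 k]) (hple k hk) _
      have hsum : ∑ j'' ∈ Iio j, m i j'' ≤ D := by
        calc ∑ j'' ∈ Iio j, m i j'' ≤ ∑ j'', m i j'' :=
              Finset.sum_le_sum_of_subset (Finset.subset_univ _)
          _ ≤ D := hdeg i
      have hpowle : h p ^ (∑ j'' ∈ Iio j, m i j'') ≤ h p ^ D :=
        pow_le_pow_right₀ (h1 p) hsum
      have hchainp : h p ^ (D+1) ≤ h j := hchain p j (by simp [hp]; omega)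
      have hb1p : b1 ≤ h p := hb1 p
      calc b1 * ∏ j'' ∈ Iio j, h j'' ^ m i j'' ≤ h p * h p ^ D := by
            apply mul_le_mul hb1p (le_trans hprodle hpowle) (le_of_lt (hpos i _)) (by linarith [h1 p])
        _ = h p ^ (D+1) := by rw [pow_succ]; ring
        _ ≤ h j := hchainp
  have hIoieq : ∏ j'' ∈ Ioi j, h j'' ^ m i j'' = ∏ j'' ∈ Ioi j, h j'' ^ m i' j'' :=
    Finset.prod_congr rfl fun k hk => by rw [hjeq k (Finset.mem_Ioi.mp hk)]
  have hlow1 : (1:ℚ) ≤ ∏ j'' ∈ Iio j, h j'' ^ m i' j'' := by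
    rw [← Finset.prod_const_one (s := (Iio j : Finset (Fin n)))]
    apply Finset.prod_le_prod
    · intro k _; norm_num
    · intro k _
      exact one_le_pow₀ (h1 k)
  rw [hsplit i, hsplit i']
  have hIoipos : (0:ℚ) < ∏ j'' ∈ Ioi j, h j'' ^ m i' j'' := hpos i' _
  have hmjpos : (0:ℚ) < h j ^ m i j := pow_pos (by linarith [h1 j]) _
  calc b1 * ((∏ j'' ∈ Iio j, h j'' ^ m i j'') * (h j ^ m i j * ∏ j'' ∈ Ioi j, h j'' ^ m i j''))
      = (b1 * ∏ j'' ∈ Iio j, h j'' ^ m i j'') * (h j ^ m i j * ∏ j'' ∈ Ioi j, h j'' ^ m i' j'') := by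
        rw [hIoieq]; ring
    _ ≤ h j * (h j ^ m i j * ∏ j'' ∈ Ioi j, h j'' ^ m i' j'') := by
        apply mul_le_mul_of_nonneg_right hkey
        positivity
    _ = h j ^ (m i j + 1) * ∏ j'' ∈ Ioi j, h j'' ^ m i' j'' := by
        rw [pow_succ]; ring
    _ ≤ h j ^ m i' j * ∏ j'' ∈ Ioi j, h j'' ^ m i' j'' := by
        apply mul_le_mul_of_nonneg_right _ (le_of_lt hIoipos)
        exact pow_le_pow_right₀ (h1 j) (by omega)
    _ ≤ (∏ j'' ∈ Iio j, h j'' ^ m i' j'') * (h j ^ m i' j * ∏ j'' ∈ Ioi j, h j'' ^ m i' j'') := by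
        rw [← mul_assoc]
        apply mul_le_mul_of_nonneg_right _ (le_of_lt hIoipos)
        have hb0 : (0:ℚ) < h j ^ m i' j :=
          pow_pos (by linarith [h1 j] : (0:ℚ) < h j) _
        exact le_mul_of_one_le_left (le_of_lt hb0) hlow1

private lemma chainsum {n t D : ℕ} (m : Fin t → Fin n → ℕ)
    (hdeg : ∀ i, ∑ j, m i j ≤ D)
    (hlex : ∀ i i' : Fin t, i < i' →
      ∃ j : Fin n, m i j < m i' j ∧ ∀ j', j < j' → m i j' = m i' j')
    (h : Fin n → ℚ) (b1 : ℚ) (hb13 : 3 ≤ b1)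
    (hb1 : ∀ j, b1 ≤ h j)
    (hmono : ∀ j j' : Fin n, j ≤ j' → h j ≤ h j')
    (hchain : ∀ j j' : Fin n, (j : ℕ) + 1 = (j' : ℕ) → h j ^ (D + 1) ≤ h j')
    (i' : Fin t) :
    (b1 - 1) * ∑ k ∈ range i'.val,
        (∏ j, h j ^ m ⟨min k i'.val, lt_of_le_of_lt (min_le_right _ _) i'.isLt⟩ j)
      ≤ ∏ j, h j ^ m i' j := by
  have h1 : ∀ j'' : Fin n, (1:ℚ) ≤ h j'' := fun j'' => le_trans (by linarith) (hb1 j'')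
  have hres := geo b1 (by linarith)
    (fun k => ∏ j, h j ^ m ⟨min k i'.val, lt_of_le_of_lt (min_le_right _ _) i'.isLt⟩ j)
    (fun k => Finset.prod_nonneg fun j _ => pow_nonneg (by linarith [h1 j]) _)
    i'.val
    (fun k hk => by
      have e1 : (⟨min k i'.val, lt_of_le_of_lt (min_le_right _ _) i'.isLt⟩ : Fin t)
          = ⟨k, by omega⟩ := by
        apply Fin.ext; simp; omega
      have e2 : (⟨min (k+1) i'.val, lt_of_le_of_lt (min_le_right _ _) i'.isLt⟩ : Fin t)
          = ⟨k+1, by omega⟩ := by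
        apply Fin.ext; simp; omega
      rw [e1, e2]
      exact ratio m hdeg h b1 hb13 hb1 hmono hchain _ _
        (hlex _ _ (by simp [Fin.lt_def])))
  have e3 : (⟨min i'.val i'.val, lt_of_le_of_lt (min_le_right _ _) i'.isLt⟩ : Fin t) = i' := by
    apply Fin.ext; simp
  rw [e3] at hres
  exact hres

set_option maxHeartbeats 2000000 in
theorem stmt17 (n t D : ℕ) (C b : ℤ) (hn : 0 < n) (ht : 0 < t)
    (c : Fin t → ℤ) (m : Fin t → Fin n → ℕ)
    (hc0 : ∀ i, c i ≠ 0) (hcC : ∀ i, |c i| ≤ C)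
    (hdeg : ∀ i, ∑ j, m i j ≤ D)
    (hlex : ∀ i i' : Fin t, i < i' →
      ∃ j : Fin n, m i j < m i' j ∧ ∀ j', j < j' → m i j' = m i' j')
    (β : Fin n → ℤ) (hb : b ≥ 2 * C + 1)
    (hβ1 : β ⟨0, hn⟩ ≥ b)
    (hchain : ∀ i j : Fin n, (i : ℕ) + 1 = (j : ℕ) → β i ^ (D + 1) ≤ β j)
    (e : Fin n → ℕ) (he : e = m ⟨t - 1, by omega⟩)
    (last : Fin n) (hlast : (last : ℕ) = n - 1) :
    (1 : ℚ) / (1 + 2 * (C : ℚ) / (((β ⟨0, hn⟩ : ℚ) - 1) * ((β last : ℚ) - 1))) <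
      (((∑ i, c i * ∏ j, β j ^ m i j : ℤ) : ℚ) / (β last : ℚ) ^ e last) /
        (((∑ i, c i * ∏ j, (if j = last then β j + 1 else β j) ^ m i j : ℤ) : ℚ) /
          ((β last : ℚ) + 1) ^ e last) ∧
    (((∑ i, c i * ∏ j, β j ^ m i j : ℤ) : ℚ) / (β last : ℚ) ^ e last) /
        (((∑ i, c i * ∏ j, (if j = last then β j + 1 else β j) ^ m i j : ℤ) : ℚ) /
          ((β last : ℚ) + 1) ^ e last) <
      1 + 2 * (C : ℚ) / (((β ⟨0, hn⟩ : ℚ) - 1) * ((β last : ℚ) - 1)) := by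
  subst he
  -- opaque definitions
  obtain ⟨it, hitdef⟩ : ∃ i : Fin t, i = ⟨t - 1, Nat.sub_lt ht Nat.one_pos⟩ := ⟨_, rfl⟩
  obtain ⟨x, hxdef⟩ : ∃ q : ℚ, q = ((β last : ℚ)) := ⟨_, rfl⟩
  obtain ⟨b1, hb1def⟩ : ∃ q : ℚ, q = ((β ⟨0, hn⟩ : ℚ)) := ⟨_, rfl⟩
  obtain ⟨Cq, hCqdef⟩ : ∃ q : ℚ, q = ((C : ℚ)) := ⟨_, rfl⟩
  obtain ⟨E, hEdef⟩ : ∃ k : ℕ, k = m it last := ⟨_, rfl⟩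
  obtain ⟨g', hg'def⟩ : ∃ f : Fin n → ℚ,
      f = fun j => if j = last then (β j : ℚ) + 1 else (β j : ℚ) := ⟨_, rfl⟩
  obtain ⟨V, hVdef⟩ : ∃ f : Fin t → ℚ, f = fun i => ∏ j, ((β j : ℚ)) ^ m i j := ⟨_, rfl⟩
  obtain ⟨V', hV'def⟩ : ∃ f : Fin t → ℚ, f = fun i => ∏ j, g' j ^ m i j := ⟨_, rfl⟩
  obtain ⟨SA, hSAdef⟩ : ∃ q : ℚ, q = ∑ i, (c i : ℚ) * V i := ⟨_, rfl⟩
  obtain ⟨SB, hSBdef⟩ : ∃ q : ℚ, q = ∑ i, (c i : ℚ) * V' i := ⟨_, rfl⟩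
  obtain ⟨A, hAdef⟩ : ∃ q : ℚ, q = SA / x ^ E := ⟨_, rfl⟩
  obtain ⟨B, hBdef⟩ : ∃ q : ℚ, q = SB / (x + 1) ^ E := ⟨_, rfl⟩
  obtain ⟨P, hPdef⟩ : ∃ q : ℚ, q = (b1 - 1) * (x - 1) := ⟨_, rfl⟩
  have hit : ∀ pf : t - 1 < t, (⟨t - 1, pf⟩ : Fin t) = it := fun _ => by rw [hitdef]
  have hVapp : ∀ i, V i = ∏ j, ((β j : ℚ)) ^ m i j := fun i => by rw [hVdef]
  have hV'app : ∀ i, V' i = ∏ j, g' j ^ m i j := fun i => by rw [hV'def]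
  -- rewrite the goal into the opaque names
  have hSAeq : ((∑ i, c i * ∏ j, β j ^ m i j : ℤ) : ℚ) = SA := by
    rw [hSAdef, hVdef]; push_cast; rfl
  have hSBeq : ((∑ i, c i * ∏ j, (if j = last then β j + 1 else β j) ^ m i j : ℤ) : ℚ) = SB := by
    rw [hSBdef, hV'def, hg'def]; push_cast [apply_ite (Int.cast : ℤ → ℚ)]; rfl
  rw [hSAeq, hSBeq, ← hxdef, ← hb1def, ← hCqdef, hit, ← hEdef, ← hAdef, ← hBdef, ← hPdef]
  show 1 / (1 + 2 * Cq / P) < A / B ∧ A / B < 1 + 2 * Cq / P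
  -- integer-level facts
  have hC1 : (1:ℤ) ≤ C := le_trans (Int.one_le_abs (hc0 ⟨0, ht⟩)) (hcC ⟨0, ht⟩)
  have hb3 : (3:ℤ) ≤ b := by omega
  have hβb : ∀ k : ℕ, (hk : k < n) → b ≤ β ⟨k, hk⟩ := by
    intro k
    induction k with
    | zero => intro hk; exact hβ1
    | succ k ih =>
      intro hk
      have hk' : k < n := by omega
      have h1 := ih hk'
      have h2 := hchain ⟨k, hk'⟩ ⟨k+1, hk⟩ rfl
      have h3 : β ⟨k, hk'⟩ ≤ β ⟨k, hk'⟩ ^ (D+1) :=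
        le_self_pow₀ (by omega) (by omega)
      omega
  have hβmono : ∀ (k k' : ℕ) (hk : k < n) (hk' : k' < n), k ≤ k' → β ⟨k, hk⟩ ≤ β ⟨k', hk'⟩ := by
    intro k k'
    induction k' with
    | zero =>
      intro hk hk' hle
      have : k = 0 := by omega
      subst this
      exact le_refl _
    | succ k' ih =>
      intro hk hk' hle
      rcases Nat.lt_or_ge k (k'+1) with hlt | hge
      · have hk'' : k' < n := by omega
        have h1 := ih hk hk'' (by omega)
        have h2 := hchain ⟨k', hk''⟩ ⟨k'+1, hk'⟩ rfl
        have h3 : β ⟨k', hk''⟩ ≤ β ⟨k', hk''⟩ ^ (D+1) :=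
          le_self_pow₀ (by have := hβb k' hk''; omega) (by omega)
        omega
      · have : k = k'+1 := by omega
        subst this
        exact le_refl _
  have hβmono' : ∀ j j' : Fin n, j ≤ j' → β j ≤ β j' := by
    intro j j' hle
    have := hβmono j.val j'.val j.isLt j'.isLt hle
    simpa using this
  have hβb' : ∀ j : Fin n, b ≤ β j := fun j => by simpa using hβb j.val j.isLt
  -- rational-level facts
  have hCq1 : (1:ℚ) ≤ Cq := by rw [hCqdef]; exact_mod_cast hC1
  have hCq0 : (0:ℚ) < Cq := by linarith
  have hgb1 : ∀ j : Fin n, b1 ≤ (β j : ℚ) := by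
    intro j
    rw [hb1def]
    exact_mod_cast hβmono' ⟨0, hn⟩ j (by simp [Fin.le_def])
  have hg3 : ∀ j : Fin n, (3:ℚ) ≤ (β j : ℚ) := by
    intro j
    have := hβb' j
    push_cast
    exact_mod_cast (by omega : (3:ℤ) ≤ β j)
  have hb13 : (3:ℚ) ≤ b1 := by rw [hb1def]; exact hg3 _
  have hx3 : (3:ℚ) ≤ x := by rw [hxdef]; exact hg3 _
  have h2C : 2 * Cq + 1 ≤ b1 := by
    rw [hCqdef, hb1def]
    exact_mod_cast le_trans hb (hβ1)
  have hb1x : b1 ≤ x := by rw [hxdef]; exact hgb1 _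
  have hgmono : ∀ j j' : Fin n, j ≤ j' → ((β j : ℚ)) ≤ (β j' : ℚ) := by
    intro j j' h; exact_mod_cast hβmono' j j' h
  have hgchainQ : ∀ j j' : Fin n, (j : ℕ) + 1 = (j' : ℕ) → ((β j : ℚ)) ^ (D+1) ≤ (β j' : ℚ) := by
    intro j j' h; exact_mod_cast hchain j j' h
  have hjlast : ∀ j : Fin n, j ≤ last := by
    intro j; rw [Fin.le_def, hlast]; omega
  -- g' facts
  have hg'ge : ∀ j : Fin n, (β j : ℚ) ≤ g' j := by
    intro j
    rw [hg'def]
    simp only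
    split <;> linarith
  have hg'last : g' last = (β last : ℚ) + 1 := by rw [hg'def]; simp
  have hg'ne : ∀ j : Fin n, j ≠ last → g' j = (β j : ℚ) := by
    intro j hj
    rw [hg'def]
    simp [hj]
  have hg'b1 : ∀ j : Fin n, b1 ≤ g' j := fun j => le_trans (hgb1 j) (hg'ge j)
  have hg'3 : ∀ j : Fin n, (3:ℚ) ≤ g' j := fun j => le_trans (hg3 j) (hg'ge j)
  have hg'mono : ∀ j j' : Fin n, j ≤ j' → g' j ≤ g' j' := by
    intro j j' hle
    by_cases hj : j = last
    · have : j' = last := le_antisymm (hjlast j') (hj ▸ hle)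
      rw [hj, this]
    · rw [hg'ne j hj]
      exact le_trans (hgmono j j' hle) (hg'ge j')
  have hg'chain : ∀ j j' : Fin n, (j : ℕ) + 1 = (j' : ℕ) → g' j ^ (D+1) ≤ g' j' := by
    intro j j' hjj
    have hj : j ≠ last := by
      intro h
      have h1 : (j : ℕ) = n - 1 := by rw [h, hlast]
      have h2 := j'.isLt
      omega
    rw [hg'ne j hj]
    exact le_trans (hgchainQ j j' hjj) (hg'ge j')
  -- positivity
  have hVpos : ∀ i, 0 < V i := by
    intro i
    rw [hVdef]
    exact Finset.prod_pos fun j _ => pow_pos (by linarith [hg3 j]) _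
  have hV'pos : ∀ i, 0 < V' i := by
    intro i
    rw [hV'def]
    exact Finset.prod_pos fun j _ => pow_pos (by linarith [hg'3 j]) _
  -- k facts
  have hkmono : ∀ i i' : Fin t, i ≤ i' → m i last ≤ m i' last := by
    intro i i' hle
    rcases eq_or_lt_of_le hle with heq | hlt
    · rw [heq]
    · obtain ⟨j, hjlt, hjeq⟩ := hlex i i' hlt
      rcases eq_or_lt_of_le (hjlast j) with hjl | hjl
      · rw [hjl] at hjlt
        exact le_of_lt hjlt
      · exact le_of_eq (hjeq last hjl)
  have hkE : ∀ i : Fin t, m i last ≤ E := by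
    intro i
    rw [hEdef]
    apply hkmono i it
    have h1 := i.isLt
    have h2 : (it : ℕ) = t - 1 := by rw [hitdef]
    rw [Fin.le_def, h2]
    omega
  have hED : E ≤ D := by
    rw [hEdef]
    calc m it last = m it last := rfl
      _ ≤ ∑ j, m it j := Finset.single_le_sum (fun j _ => Nat.zero_le _) (mem_univ last)
      _ ≤ D := hdeg it
  -- product split
  obtain ⟨Pi, hPidef⟩ : ∃ f : Fin t → ℚ,
      f = fun i => ∏ j ∈ univ.erase last, ((β j : ℚ)) ^ m i j := ⟨_, rfl⟩
  have hPipos : ∀ i, 0 < Pi i := by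
    intro i
    rw [hPidef]
    exact Finset.prod_pos fun j _ => pow_pos (by linarith [hg3 j]) _
  have hPi1 : ∀ i, 1 ≤ Pi i := by
    intro i
    rw [hPidef]
    rw [← Finset.prod_const_one (s := univ.erase last)]
    apply Finset.prod_le_prod
    · intro j _; norm_num
    · intro j _; exact one_le_pow₀ (by linarith [hg3 j])
  have hVsplit : ∀ i, V i = x ^ m i last * Pi i := by
    intro i
    rw [hVdef, hPidef, hxdef]
    exact (Finset.mul_prod_erase univ (fun j => ((β j : ℚ)) ^ m i j) (mem_univ last)).symm
  have hPiapp : ∀ i, Pi i = ∏ j ∈ univ.erase last, ((β j : ℚ)) ^ m i j := fun i => by rw [hPidef]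
  have hV'split : ∀ i, V' i = (x + 1) ^ m i last * Pi i := by
    intro i
    calc V' i = g' last ^ m i last * ∏ j ∈ univ.erase last, g' j ^ m i j := by
          rw [hV'app i]
          exact (Finset.mul_prod_erase univ (fun j => g' j ^ m i j) (mem_univ last)).symm
      _ = (x + 1) ^ m i last * Pi i := by
          rw [hg'last, hPiapp i, hxdef]
          congr 1
          apply Finset.prod_congr rfl
          intro j hj
          rw [hg'ne j (Finset.ne_of_mem_erase hj)]
  -- delta
  obtain ⟨δ, hδdef⟩ : ∃ f : Fin t → ℚ,
      f = fun i => V i / x ^ E - V' i / (x + 1) ^ E := ⟨_, rfl⟩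
  have hxne : x ≠ 0 := by linarith
  have hx1ne : (x + 1) ≠ 0 := by linarith
  have hδeq : ∀ i, δ i = Pi i * ((x+1)^(E - m i last) - x^(E - m i last))
      / (x^(E - m i last) * (x+1)^(E - m i last)) := by
    intro i
    have hk : m i last ≤ E := hkE i
    rw [hδdef]
    simp only
    rw [hVsplit i, hV'split i, show E = m i last + (E - m i last) by omega, pow_add, pow_add]
    rw [Nat.add_sub_cancel_left]
    field_simp
  have hδ0 : ∀ i, 0 ≤ δ i := by
    intro i
    rw [hδeq i]
    apply div_nonneg
    · apply mul_nonneg (le_of_lt (hPipos i))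
      have : x ^ (E - m i last) ≤ (x+1) ^ (E - m i last) :=
        pow_le_pow_left₀ (by linarith) (by linarith) _
      linarith
    · positivity
  -- A - B
  have hδapp : ∀ i, δ i = V i / x ^ E - V' i / (x + 1) ^ E := fun i => by rw [hδdef]
  have hABδ : A - B = ∑ i, (c i : ℚ) * δ i := by
    rw [hAdef, hBdef, hSAdef, hSBdef, Finset.sum_div, Finset.sum_div, ← Finset.sum_sub_distrib]
    apply Finset.sum_congr rfl
    intro i _
    rw [hδapp i]
    ring
  obtain ⟨S, hSdef⟩ : ∃ s : Finset (Fin t), s = univ.filter (fun i => m i last < E) := ⟨_, rfl⟩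
  obtain ⟨Z, hZdef⟩ : ∃ q : ℚ, q = ∑ i ∈ S, δ i := ⟨_, rfl⟩
  have hZ0 : 0 ≤ Z := by rw [hZdef]; exact Finset.sum_nonneg fun i _ => hδ0 i
  have hABZ : |A - B| ≤ Cq * Z := by
    rw [hABδ]
    calc |∑ i, (c i : ℚ) * δ i| ≤ ∑ i, |(c i : ℚ) * δ i| := Finset.abs_sum_le_sum_abs _ _
      _ ≤ ∑ i, Cq * δ i := by
          apply Finset.sum_le_sum
          intro i _
          rw [abs_mul, abs_of_nonneg (hδ0 i)]
          apply mul_le_mul_of_nonneg_right _ (hδ0 i)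
          rw [hCqdef]
          exact_mod_cast hcC i
      _ = Cq * ∑ i, δ i := (Finset.mul_sum _ _ _).symm
      _ = Cq * Z := by
          rw [hZdef, hSdef]
          congr 1
          rw [← Finset.sum_filter_add_sum_filter_not univ (fun i => m i last < E) δ]
          have h0 : ∑ i ∈ univ.filter (fun i => ¬ m i last < E), δ i = 0 := by
            apply Finset.sum_eq_zero
            intro i hi
            simp only [Finset.mem_filter] at hi
            have hkEi : E - m i last = 0 := by have := hkE i; omega
            rw [hδeq i, hkEi]
            simp
          rw [h0, add_zero]
  -- B lower bound
  have hitT : (it : ℕ) = t - 1 := by rw [hitdef]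
  have hBlow : 1 ≤ 2 * |B| := by
    obtain ⟨idx, hidxdef⟩ : ∃ f : ℕ → Fin t,
        f = fun k => (⟨min k it.val, lt_of_le_of_lt (min_le_right _ _) it.isLt⟩ : Fin t) :=
      ⟨_, rfl⟩
    have hidxapp : ∀ k, idx k
        = (⟨min k it.val, lt_of_le_of_lt (min_le_right _ _) it.isLt⟩ : Fin t) :=
      fun k => by rw [hidxdef]
    have hidx : ∀ i : Fin t, idx i.val = i := by
      intro i
      rw [hidxapp]
      apply Fin.ext
      simp only
      have := i.isLt
      omega
    have hsum0 : SB = ∑ k ∈ range t, (c (idx k) : ℚ) * V' (idx k) := by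
      rw [hSBdef, ← Fin.sum_univ_eq_sum_range (fun k => (c (idx k) : ℚ) * V' (idx k)) t]
      apply Finset.sum_congr rfl
      intro i _
      rw [hidx i]
    have htT : t = it.val + 1 := by omega
    have hsum1 : SB = (∑ k ∈ range it.val, (c (idx k) : ℚ) * V' (idx k)) + (c it : ℚ) * V' it := by
      rw [hsum0, congrArg Finset.range htT, Finset.sum_range_succ, hidx it]
    have htail : |SB - (c it : ℚ) * V' it| ≤ Cq * ∑ k ∈ range it.val, V' (idx k) := by
      have hrearr : SB - (c it : ℚ) * V' it
          = ∑ k ∈ range it.val, (c (idx k) : ℚ) * V' (idx k) := by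
        rw [hsum1]; ring
      rw [hrearr]
      calc |∑ k ∈ range it.val, (c (idx k) : ℚ) * V' (idx k)|
          ≤ ∑ k ∈ range it.val, |(c (idx k) : ℚ) * V' (idx k)| :=
            Finset.abs_sum_le_sum_abs _ _
        _ ≤ ∑ k ∈ range it.val, Cq * V' (idx k) := by
            apply Finset.sum_le_sum
            intro k _
            rw [abs_mul, abs_of_nonneg (le_of_lt (hV'pos _))]
            apply mul_le_mul_of_nonneg_right _ (le_of_lt (hV'pos _))
            rw [hCqdef]
            exact_mod_cast hcC _
        _ = Cq * ∑ k ∈ range it.val, V' (idx k) := (Finset.mul_sum _ _ _).symm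
    have hgeoB : (b1 - 1) * ∑ k ∈ range it.val, V' (idx k) ≤ V' it := by
      have heq1 : ∑ k ∈ range it.val, V' (idx k)
          = ∑ k ∈ range it.val,
              ∏ j, g' j ^ m ⟨min k it.val, lt_of_le_of_lt (min_le_right _ _) it.isLt⟩ j := by
        apply Finset.sum_congr rfl
        intro k _
        rw [hidxapp k, hV'app]
      rw [heq1, hV'app it]
      exact chainsum m hdeg hlex g' b1 hb13 hg'b1 hg'mono hg'chain it
    have hsumnn : 0 ≤ ∑ k ∈ range it.val, V' (idx k) :=
      Finset.sum_nonneg fun k _ => le_of_lt (hV'pos _)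
    have h1 : (b1 - 1) * |SB - (c it : ℚ) * V' it| ≤ Cq * V' it := by
      calc (b1 - 1) * |SB - (c it : ℚ) * V' it|
          ≤ (b1 - 1) * (Cq * ∑ k ∈ range it.val, V' (idx k)) :=
            mul_le_mul_of_nonneg_left htail (by linarith)
        _ = Cq * ((b1 - 1) * ∑ k ∈ range it.val, V' (idx k)) := by ring
        _ ≤ Cq * V' it := mul_le_mul_of_nonneg_left hgeoB (by linarith)
    have hcit : (1:ℚ) ≤ |(c it : ℚ)| := by
      exact_mod_cast Int.one_le_abs (hc0 it)
    have h2 : V' it ≤ |(c it : ℚ)| * V' it :=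
      le_mul_of_one_le_left (le_of_lt (hV'pos it)) hcit
    have htri : |(c it : ℚ)| * V' it - |SB - (c it : ℚ) * V' it| ≤ |SB| := by
      have ht1 := abs_sub_abs_le_abs_sub ((c it : ℚ) * V' it) SB
      rw [abs_sub_comm] at ht1
      rw [abs_mul, abs_of_nonneg (le_of_lt (hV'pos it))] at ht1
      linarith
    have h3 : V' it - |SB - (c it : ℚ) * V' it| ≤ |SB| := by linarith
    have h4 : (b1 - 1) * (V' it - |SB - (c it : ℚ) * V' it|) ≤ (b1 - 1) * |SB| :=
      mul_le_mul_of_nonneg_left h3 (by linarith)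
    have hSBlow : ((b1 - 1) - Cq) * V' it ≤ (b1 - 1) * |SB| := by nlinarith [h1, h4]
    have hV'ge : (x + 1) ^ E ≤ V' it := by
      rw [hV'split it, ← hEdef]
      exact le_mul_of_one_le_right (le_of_lt (pow_pos (by linarith) E)) (hPi1 it)
    have hx1pos : (0:ℚ) < (x + 1) ^ E := pow_pos (by linarith) E
    have hSB2 : (x + 1) ^ E ≤ 2 * |SB| := by
      have e1 : (b1 - 1) * (x + 1) ^ E ≤ (b1 - 1) * V' it :=
        mul_le_mul_of_nonneg_left hV'ge (by linarith)
      have e2 : (b1 - 1) * V' it ≤ 2 * (((b1 - 1) - Cq) * V' it) := by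
        nlinarith [hV'pos it]
      have e4 : (b1 - 1) * (x + 1) ^ E ≤ (b1 - 1) * (2 * |SB|) := by nlinarith [hSBlow]
      have hb1pos : (0:ℚ) < b1 - 1 := by linarith
      exact le_of_mul_le_mul_left e4 hb1pos
    rw [hBdef, abs_div, abs_of_pos hx1pos, ← mul_div_assoc, le_div_iff₀ hx1pos, one_mul]
    exact hSB2
  have hBne : B ≠ 0 := by
    intro h
    rw [h] at hBlow
    simp at hBlow
    linarith
  -- main bound
  have hZx : Z * ((b1 - 1) * x) < 1 := by
    have hxp : (0:ℚ) < x := by linarith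
    have hx1p : (0:ℚ) < x + 1 := by linarith
    have hmemS : ∀ i, i ∈ S → m i last < E := by
      intro i hi
      rw [hSdef] at hi
      exact (Finset.mem_filter.mp hi).2
    by_cases hn1 : n = 1
    · -- univariate case
      have hlast0 : last = ⟨0, hn⟩ := by
        apply Fin.ext
        simp only [hlast, hn1]
      have hxb1 : x = b1 := by rw [hxdef, hb1def, hlast0]
      have herase : (univ.erase last : Finset (Fin n)) = ∅ := by
        apply Finset.eq_empty_of_forall_notMem
        intro j hj
        obtain ⟨hne, _⟩ := Finset.mem_erase.mp hj
        apply hne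
        apply Fin.ext
        have h1 := j.isLt
        have h2 : (last:ℕ) = n - 1 := hlast
        omega
      have hPione : ∀ i, Pi i = 1 := by
        intro i
        rw [hPiapp i, herase, Finset.prod_empty]
      have hsm : ∀ i i' : Fin t, i < i' → m i last < m i' last := by
        intro i i' hlt
        obtain ⟨j, hjlt, _⟩ := hlex i i' hlt
        have hj : j = last := by
          apply Fin.ext
          have h1 := j.isLt
          have h2 : (last:ℕ) = n - 1 := hlast
          omega
        rwa [hj] at hjlt
      have hkinj : ∀ i ∈ S, ∀ i' ∈ S, E - m i last = E - m i' last → i = i' := by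
        intro i hi i' hi' hd
        have h1 := hmemS i hi
        have h2 := hmemS i' hi'
        rcases lt_trichotomy i i' with hlt | heq | hgt
        · have := hsm i i' hlt; omega
        · exact heq
        · have := hsm i' i hgt; omega
      have himg : Z = ∑ q ∈ S.image (fun i => E - m i last),
          ((x+1)^q - x^q)/((x^q)*((x+1)^q)) := by
        rw [hZdef, Finset.sum_image hkinj]
        apply Finset.sum_congr rfl
        intro i _
        rw [hδeq i, hPione i, one_mul]
      have hsub : S.image (fun i => E - m i last) ⊆ Icc 1 E := by
        intro q hq
        simp only [Finset.mem_image] at hq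
        obtain ⟨i, hi, rfl⟩ := hq
        have := hmemS i hi
        simp only [Finset.mem_Icc]
        omega
      have hZle : Z ≤ ∑ q ∈ Icc 1 E, ((x+1)^q - x^q)/((x^q)*((x+1)^q)) := by
        rw [himg]
        apply Finset.sum_le_sum_of_subset_of_nonneg hsub
        intro q _ _
        apply div_nonneg _ (le_of_lt (mul_pos (pow_pos hxp q) (pow_pos hx1p q)))
        have : x^q ≤ (x+1)^q := pow_le_pow_left₀ (by linarith) (by linarith) q
        linarith
      have hgeoeq := geomIcc x hx3 E
      have hstrict : (1:ℚ)/((x+1)^E * x) < 1/(x^E*(x-1)) := by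
        rw [div_lt_div_iff₀ (mul_pos (pow_pos hx1p E) hxp)
          (mul_pos (pow_pos hxp E) (by linarith))]
        have hp : x^E ≤ (x+1)^E := pow_le_pow_left₀ (by linarith) (by linarith) E
        nlinarith [pow_pos hxp E, pow_pos hx1p E]
      have hZlt : Z < 1/(x*(x-1)) := by
        calc Z ≤ ∑ q ∈ Icc 1 E, ((x+1)^q - x^q)/((x^q)*((x+1)^q)) := hZle
          _ = 1/(x*(x-1)) - 1/(x^E*(x-1)) + 1/((x+1)^E*x) := hgeoeq
          _ < 1/(x*(x-1)) := by linarith [hstrict]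
      rw [← hxb1]
      have hpm : (0:ℚ) < (x-1)*x := by nlinarith
      have hfin : (1/(x*(x-1))) * ((x-1)*x) = 1 := by
        have hxm1ne : x - 1 ≠ 0 := sub_ne_zero.mpr (ne_of_gt (by linarith))
        field_simp
      calc Z * ((x-1)*x) < (1/(x*(x-1))) * ((x-1)*x) := mul_lt_mul_of_pos_right hZlt hpm
        _ = 1 := hfin
    · -- multivariate case
      have hn2 : 2 ≤ n := by omega
      obtain ⟨lp, hlpdef⟩ : ∃ j : Fin n, j = ⟨n-2, by omega⟩ := ⟨_, rfl⟩
      have hlpval : (lp : ℕ) = n - 2 := by rw [hlpdef]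
      obtain ⟨γ, hγdef⟩ : ∃ q : ℚ, q = ((β lp : ℚ)) := ⟨_, rfl⟩
      have hγ3 : (3:ℚ) ≤ γ := by rw [hγdef]; exact hg3 lp
      have hγb1 : b1 ≤ γ := by rw [hγdef]; exact hgb1 lp
      have hγx : γ ≤ x := by
        rw [hγdef, hxdef]
        apply hgmono
        rw [Fin.le_def, hlpval, hlast]
        omega
      have hchainγ : γ^(D+1) ≤ x := by
        rw [hγdef, hxdef]
        apply hgchainQ lp last
        rw [hlpval, hlast]
        omega
      rcases Finset.eq_empty_or_nonempty S with hSe | hSne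
      · rw [hZdef, hSe]
        simp only [Finset.sum_empty, zero_mul]
        norm_num
      · obtain ⟨istar, histar⟩ : ∃ i : Fin t, i = S.max' hSne := ⟨_, rfl⟩
        have histarS : istar ∈ S := by rw [histar]; exact S.max'_mem hSne
        have hkstar : m istar last < E := hmemS istar histarS
        have hE1 : 1 ≤ E := by omega
        have hile : ∀ i ∈ S, i ≤ istar := by
          intro i hi
          rw [histar]
          exact S.le_max' i hi
        -- per-term bound
        have hper : ∀ i ∈ S, δ i * (x ^ E * (x + 1)) ≤ (E:ℚ) * V i := by
          intro i hi
          have hkd := hmemS i hi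
          obtain ⟨d', hd'⟩ : ∃ d', E - m i last = d' + 1 := ⟨E - m i last - 1, by omega⟩
          have hEsplit : E = m i last + (d' + 1) := by omega
          have heq1 : δ i * (x ^ E * (x + 1))
              = Pi i * ((x+1)^(d'+1) - x^(d'+1)) * (x ^ m i last * (x + 1)) / ((x+1)^(d'+1)) := by
            rw [hδeq i, hd',
              show x ^ E = x ^ m i last * x ^ (d'+1) from by rw [hEsplit, pow_add]]
            field_simp
          have hpd := pow_diff x (by linarith) d'
          have heq2 : Pi i * ((d' + 1 : ℚ) * (x+1)^d') * (x ^ m i last * (x + 1)) / ((x+1)^(d'+1))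
              = ((d':ℚ) + 1) * V i := by
            rw [hVsplit i, pow_succ]
            field_simp
          have hle1 : δ i * (x ^ E * (x + 1)) ≤ ((d':ℚ) + 1) * V i := by
            rw [heq1, ← heq2]
            apply div_le_div_of_nonneg_right ?_ (le_of_lt (pow_pos hx1p (d'+1)))
            case _ =>
              apply mul_le_mul_of_nonneg_right _
                (mul_nonneg (pow_nonneg (le_of_lt hxp) _) (le_of_lt hx1p))
              exact mul_le_mul_of_nonneg_left (by push_cast at hpd ⊢; linarith [hpd])
                (le_of_lt (hPipos i))
          have hdE : ((d':ℚ) + 1) ≤ (E : ℚ) := by exact_mod_cast (by omega : d' + 1 ≤ E)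
          calc δ i * (x ^ E * (x + 1)) ≤ ((d':ℚ) + 1) * V i := hle1
            _ ≤ (E:ℚ) * V i := mul_le_mul_of_nonneg_right hdE (le_of_lt (hVpos i))
        -- chain sum over S
        obtain ⟨idx2, hidx2def⟩ : ∃ f : ℕ → Fin t,
            f = fun k => (⟨min k istar.val,
              lt_of_le_of_lt (min_le_right _ _) istar.isLt⟩ : Fin t) := ⟨_, rfl⟩
        have hidx2app : ∀ k, idx2 k = (⟨min k istar.val,
            lt_of_le_of_lt (min_le_right _ _) istar.isLt⟩ : Fin t) := fun k => by rw [hidx2def]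
        have hidx2i : ∀ i : Fin t, i ≤ istar → idx2 i.val = i := by
          intro i hi
          rw [hidx2app]
          apply Fin.ext
          simp only
          rw [Fin.le_def] at hi
          omega
        have hSsum : ∑ i ∈ S, V i ≤ ∑ k ∈ range (istar.val + 1), V (idx2 k) := by
          have he1 : ∑ i ∈ S, V i = ∑ k ∈ S.image Fin.val, V (idx2 k) := by
            rw [Finset.sum_image (by intro a _ b _ h; exact Fin.ext h)]
            apply Finset.sum_congr rfl
            intro i hi
            rw [hidx2i i (hile i hi)]
          rw [he1]
          apply Finset.sum_le_sum_of_subset_of_nonneg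
          · intro k hk
            simp only [Finset.mem_image] at hk
            obtain ⟨i, hi, rfl⟩ := hk
            simp only [Finset.mem_range]
            have := hile i hi
            rw [Fin.le_def] at this
            omega
          · intro k _ _
            exact le_of_lt (hVpos _)
        have hgeoS : (b1 - 1) * ∑ k ∈ range istar.val, V (idx2 k) ≤ V istar := by
          have he2 : ∑ k ∈ range istar.val, V (idx2 k)
              = ∑ k ∈ range istar.val, ∏ j, ((β j : ℚ)) ^ m ⟨min k istar.val,
                  lt_of_le_of_lt (min_le_right _ _) istar.isLt⟩ j := by
            apply Finset.sum_congr rfl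
            intro k _
            rw [hidx2app k, hVapp]
          rw [he2, hVapp istar]
          exact chainsum m hdeg hlex (fun j => ((β j : ℚ))) b1 hb13 hgb1 hgmono hgchainQ istar
        have hSV : (b1 - 1) * ∑ i ∈ S, V i ≤ b1 * V istar := by
          have h5 : (b1-1) * ∑ k ∈ range (istar.val+1), V (idx2 k) ≤ b1 * V istar := by
            rw [Finset.sum_range_succ, hidx2i istar (le_refl _)]
            nlinarith [hgeoS, hVpos istar]
          calc (b1-1) * ∑ i ∈ S, V i
              ≤ (b1-1) * ∑ k ∈ range (istar.val+1), V (idx2 k) :=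
                mul_le_mul_of_nonneg_left hSsum (by linarith)
            _ ≤ b1 * V istar := h5
        -- bound on V istar
        have hPle : Pi istar ≤ γ ^ (∑ j ∈ univ.erase last, m istar j) := by
          rw [hPiapp istar, ← Finset.prod_pow_eq_pow_sum]
          apply Finset.prod_le_prod
          · intro j _
            exact pow_nonneg (by linarith [hg3 j]) _
          · intro j hj
            apply pow_le_pow_left₀ (by linarith [hg3 j])
            rw [hγdef]
            apply hgmono
            have hjne := Finset.ne_of_mem_erase hj
            have hjv : (j:ℕ) ≠ (last:ℕ) := fun h => hjne (Fin.ext h)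
            have := j.isLt
            rw [Fin.le_def, hlpval]
            omega
        have hsumer : (∑ j ∈ univ.erase last, m istar j) + m istar last = ∑ j, m istar j :=
          Finset.sum_erase_add univ _ (mem_univ last)
        have hsumD : (∑ j ∈ univ.erase last, m istar j) ≤ D - m istar last := by
          have := hdeg istar
          omega
        have hPle2 : Pi istar ≤ γ ^ (D - m istar last) :=
          le_trans hPle (pow_le_pow_right₀ (by linarith) hsumD)
        have hVstar : V istar ≤ γ^(D - E + 1) * x^(E - 1) := by
          have hswap : x ^ m istar last * γ ^ (D - m istar last) ≤ γ^(D-E+1) * x^(E-1) := by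
            have e1 : D - m istar last = (D - E + 1) + (E - 1 - m istar last) := by omega
            have e2 : x^(E-1) = x^(m istar last) * x^(E-1-m istar last) := by
              rw [← pow_add]
              congr 1
              omega
            have e3 : γ^(E-1-m istar last) ≤ x^(E-1-m istar last) :=
              pow_le_pow_left₀ (by linarith) hγx _
            rw [e1, pow_add, e2]
            calc x ^ m istar last * (γ^(D-E+1) * γ^(E-1-m istar last))
                = γ^(D-E+1) * (x ^ m istar last * γ^(E-1-m istar last)) := by ring
              _ ≤ γ^(D-E+1) * (x ^ m istar last * x^(E-1-m istar last)) := by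
                  apply mul_le_mul_of_nonneg_left _ (pow_nonneg (by linarith) _)
                  exact mul_le_mul_of_nonneg_left e3 (pow_nonneg (le_of_lt hxp) _)
          calc V istar = x ^ m istar last * Pi istar := hVsplit istar
            _ ≤ x ^ m istar last * γ ^ (D - m istar last) :=
                mul_le_mul_of_nonneg_left hPle2 (pow_nonneg (le_of_lt hxp) _)
            _ ≤ γ^(D-E+1) * x^(E-1) := hswap
        -- numeric bound
        have hnum : (E:ℚ) * b1 * γ^(D - E + 1) ≤ x := by
          have hE3 : (E:ℚ) ≤ γ^(E-1) := by
            have h1 : E ≤ 3^(E-1) := by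
              have := nat_le_pow3 (E-1)
              omega
            have h2 : ((3:ℚ))^(E-1) ≤ γ^(E-1) := pow_le_pow_left₀ (by norm_num) hγ3 _
            have h3 : (E:ℚ) ≤ (3:ℚ)^(E-1) := by
              calc (E:ℚ) ≤ ((3^(E-1) : ℕ):ℚ) := by exact_mod_cast h1
                _ = (3:ℚ)^(E-1) := by push_cast; ring
            linarith
          have h4 : (E:ℚ) * b1 ≤ γ^(E-1) * γ := by
            apply mul_le_mul hE3 hγb1 (by linarith) (pow_nonneg (by linarith) _)
          have h5 : γ^(E-1) * γ * γ^(D-E+1) = γ^(D+1) := by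
            rw [← pow_succ, ← pow_add]
            congr 1
            omega
          calc (E:ℚ) * b1 * γ^(D-E+1) ≤ (γ^(E-1)*γ) * γ^(D-E+1) :=
              mul_le_mul_of_nonneg_right h4 (pow_nonneg (by linarith) _)
            _ = γ^(D+1) := h5
            _ ≤ x := hchainγ
        -- final assembly of this case
        have hZsum : Z * (x^E * (x+1)) ≤ (E:ℚ) * ∑ i ∈ S, V i := by
          rw [hZdef, Finset.sum_mul, Finset.mul_sum]
          exact Finset.sum_le_sum hper
        have hxE1 : x^(E-1) * x = x ^ E := by
          rw [← pow_succ]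
          congr 1
          omega
        have hxEp : (0:ℚ) < x^E := pow_pos hxp E
        have hSVnn : 0 ≤ ∑ i ∈ S, V i := Finset.sum_nonneg fun i _ => le_of_lt (hVpos i)
        have hKK : Z * ((b1-1)*x) * (x^E * (x+1)) < 1 * (x^E*(x+1)) := by
          calc Z * ((b1-1)*x) * (x^E * (x+1)) = (Z * (x^E*(x+1))) * ((b1-1)*x) := by ring
            _ ≤ ((E:ℚ) * ∑ i ∈ S, V i) * ((b1-1)*x) :=
                mul_le_mul_of_nonneg_right hZsum (by nlinarith)
            _ = ((E:ℚ)*x) * ((b1-1) * ∑ i ∈ S, V i) := by ring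
            _ ≤ ((E:ℚ)*x) * (b1 * V istar) :=
                mul_le_mul_of_nonneg_left hSV
                  (mul_nonneg (Nat.cast_nonneg E) (le_of_lt hxp))
            _ ≤ ((E:ℚ)*x) * (b1 * (γ^(D-E+1) * x^(E-1))) := by
                apply mul_le_mul_of_nonneg_left _
                  (mul_nonneg (Nat.cast_nonneg E) (le_of_lt hxp))
                exact mul_le_mul_of_nonneg_left hVstar (by linarith)
            _ = ((E:ℚ) * b1 * γ^(D-E+1)) * (x^(E-1) * x) := by ring
            _ = ((E:ℚ) * b1 * γ^(D-E+1)) * x^E := by rw [hxE1]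
            _ ≤ x * x^E := mul_le_mul_of_nonneg_right hnum (le_of_lt hxEp)
            _ < (x+1) * x^E := by nlinarith [hxEp]
            _ = 1 * (x^E*(x+1)) := by ring
        exact lt_of_mul_lt_mul_right hKK (le_of_lt (mul_pos hxEp hx1p))
  -- final assembly
  have hP0 : 0 < P := by rw [hPdef]; nlinarith
  have hP2C : P + 2 * Cq ≤ (b1 - 1) * x := by
    rw [hPdef]; nlinarith
  have hM : |A - B| * (P + 2 * Cq) < 2 * Cq * |B| := by
    have h1 : |A - B| * (P + 2 * Cq) ≤ (Cq * Z) * ((b1 - 1) * x) := by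
      apply mul_le_mul hABZ hP2C (by linarith) (mul_nonneg (le_of_lt hCq0) hZ0)
    have h2 : (Cq * Z) * ((b1 - 1) * x) = Cq * (Z * ((b1 - 1) * x)) := by ring
    have h3 : Cq * (Z * ((b1 - 1) * x)) < Cq * 1 := by
      apply mul_lt_mul_of_pos_left hZx hCq0
    have h4 : Cq ≤ 2 * Cq * |B| := by nlinarith [hBlow, hCq0]
    linarith
  have hBabs : 0 < |B| := abs_pos.mpr hBne
  have hPC0 : 0 < P + 2 * Cq := by linarith
  have habs : |A - B| / |B| < 2 * Cq / (P + 2 * Cq) := by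
    rw [div_lt_div_iff₀ hBabs hPC0]
    linarith
  have hABdiv : |A / B - 1| < 2 * Cq / (P + 2 * Cq) := by
    rw [show A / B - 1 = (A - B) / B by field_simp, abs_div]
    exact habs
  obtain ⟨hlo, hhi⟩ := abs_lt.mp hABdiv
  constructor
  · have heq : 1 / (1 + 2 * Cq / P) = 1 - 2 * Cq / (P + 2 * Cq) := by
      field_simp
      ring
    rw [heq]
    linarith
  · have hrr : 2 * Cq / (P + 2 * Cq) < 2 * Cq / P := by
      apply div_lt_div_of_pos_left (by linarith) hP0 (by linarith)
    linarith
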